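/- Let β, θ, β′, θ′ ∈ ℝ^p and α, α′ ∈ ℝⁿ satisfy the constraints Xθ ∈ R and Xθ′ ∈ R; Xβ ⊥ R and Xβ′ ⊥ R; α ∈ S and α′ ∈ S; α ⊥ R and α′ ⊥ R. If Xβ + Xθ + α = Xβ′ + Xθ′ + α′, then β = β′, θ = θ′, and α = α′. -/
import Mathlib


open Matrix

lemma mulVec_eq_sum_cols (n p : ℕ) (X : Matrix (Fin n) (Fin p) ℝ) (v : Fin p → ℝ) :
    X.mulVec v = ∑ j : Fin p, v j • (fun i : Fin n => X i j) := by
  funext i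
  simp [Matrix.mulVec, dotProduct, Finset.sum_apply, mul_comm]

lemma mulVec_mem_span (n p : ℕ) (X : Matrix (Fin n) (Fin p) ℝ) (v : Fin p → ℝ) :
    X.mulVec v ∈ Submodule.span ℝ (Set.range (fun j : Fin p => fun i : Fin n => X i j)) := by
  rw [mulVec_eq_sum_cols]
  exact Submodule.sum_mem _ fun j _ =>
    Submodule.smul_mem _ _ (Submodule.subset_span (Set.mem_range_self j))

lemma mulVec_eq_zero_of_li (n p : ℕ) (X : Matrix (Fin n) (Fin p) ℝ)
    (hX : LinearIndependent ℝ (fun j : Fin p => fun i : Fin n => X i j))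
    (v : Fin p → ℝ) (h : X.mulVec v = 0) : v = 0 := by
  rw [mulVec_eq_sum_cols] at h
  funext j
  exact Fintype.linearIndependent_iff.mp hX v h j

/-- **Identifiability of the regression model with network effects.**
`X` is an `n × p` real matrix with linearly independent columns, `S` is a linear
subspace of `ℝⁿ`, and `R = col(X) ⊓ S`.  If `(β, θ, α)` and `(β', θ', α')` both satisfy
the identifiability constraints `Xθ ∈ R`, `Xβ ⊥ R`, `α ∈ S`, `α ⊥ R` and produce the same
mean vector `Xβ + Xθ + α = Xβ' + Xθ' + α'`, then the parameters coincide. -/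
theorem stmt_0
    (n p : ℕ) (X : Matrix (Fin n) (Fin p) ℝ)
    (hX : LinearIndependent ℝ (fun j : Fin p => fun i : Fin n => X i j))
    (S : Submodule ℝ (Fin n → ℝ))
    (R : Submodule ℝ (Fin n → ℝ))
    (hR : R = Submodule.span ℝ (Set.range (fun j : Fin p => fun i : Fin n => X i j)) ⊓ S)
    (β θ β' θ' : Fin p → ℝ) (α α' : Fin n → ℝ)
    (hθ : X.mulVec θ ∈ R) (hθ' : X.mulVec θ' ∈ R)
    (hβ : ∀ u ∈ R, X.mulVec β ⬝ᵥ u = 0) (hβ' : ∀ u ∈ R, X.mulVec β' ⬝ᵥ u = 0)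
    (hα : α ∈ S) (hα' : α' ∈ S)
    (hαR : ∀ u ∈ R, α ⬝ᵥ u = 0) (hα'R : ∀ u ∈ R, α' ⬝ᵥ u = 0)
    (heq : X.mulVec β + X.mulVec θ + α = X.mulVec β' + X.mulVec θ' + α') :
    β = β' ∧ θ = θ' ∧ α = α' := by
  -- u = X(θ - θ') ∈ R
  set u : Fin n → ℝ := X.mulVec θ - X.mulVec θ' with hu
  have huR : u ∈ R := R.sub_mem hθ hθ'
  have hrel : u = (X.mulVec β' - X.mulVec β) + (α' - α) := by
    have := heq
    funext i
    have h := congrFun heq i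
    simp only [Pi.add_apply] at h
    simp only [hu, Pi.add_apply, Pi.sub_apply]
    linarith
  have huu : u ⬝ᵥ u = 0 := by
    nth_rewrite 1 [hrel]
    simp only [add_dotProduct, sub_dotProduct,
      hβ u huR, hβ' u huR, hαR u huR, hα'R u huR]
    ring
  have hu0 : u = 0 := by
    have := (dotProduct_self_eq_zero (v := u)).mp huu
    exact this
  have hθeq : θ = θ' := by
    have : X.mulVec (θ - θ') = 0 := by
      rw [Matrix.mulVec_sub]; exact hu0
    have := mulVec_eq_zero_of_li n p X hX _ this
    exact sub_eq_zero.mp this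
  -- now w = X β - X β' = α' - α ∈ R
  have hrel2 : X.mulVec β - X.mulVec β' = α' - α := by
    funext i
    have h := congrFun heq i
    have h2 := congrFun hu0 i
    simp only [Pi.add_apply] at h
    simp only [hu, Pi.sub_apply, Pi.zero_apply] at h2
    simp only [Pi.sub_apply]
    linarith
  have hwR : X.mulVec β - X.mulVec β' ∈ R := by
    rw [hR]
    constructor
    · rw [← Matrix.mulVec_sub]
      exact mulVec_mem_span n p X _
    · rw [hrel2]
      exact S.sub_mem hα' hα
  have hww : (X.mulVec β - X.mulVec β') ⬝ᵥ (X.mulVec β - X.mulVec β') = 0 := by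
    rw [sub_dotProduct, hβ _ hwR, hβ' _ hwR, sub_zero]
  have hw0 : X.mulVec β - X.mulVec β' = 0 := dotProduct_self_eq_zero.mp hww
  have hβeq : β = β' := by
    have : X.mulVec (β - β') = 0 := by rw [Matrix.mulVec_sub]; exact hw0
    exact sub_eq_zero.mp (mulVec_eq_zero_of_li n p X hX _ this)
  have hαeq : α = α' := by
    rw [hw0] at hrel2
    funext i
    have := congrFun hrel2 i
    simp only [Pi.zero_apply, Pi.sub_apply] at this
    linarith
  exact ⟨hβeq, hθeq, hαeq⟩
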